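/- Fix k ≥ 1, ρ ∈ (0,1)^k with Σ_r ρ_r = 1, a symmetric matrix P ∈ (0,1)^{k×k}, and indices i ≠ j in [k] such that P_{ri} ≠ P_{rj} for at least one r ∈ [k]. Let ξ* ∈ (0,1) be a maximizer of ξ ↦ CH_ξ(θ_i, θ_j) over [0,1], and let x* = ( ρ_r P_{ri}^{ξ*} P_{rj}^{1−ξ*}, ρ_r (1−P_{ri})^{ξ*}(1−P_{rj})^{1−ξ*} )_{r∈[k]} ∈ ℝ^{2k}. Then η_i(x*) = η_j(x*) = Δ_+(θ_i, θ_j). In particular, if t_0 = 1/Δ_+(θ_i, θ_j), then x* ∈ DR_{1/t_0}(i) ∩ DR_{1/t_0}(j). -/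

import Mathlib

/-- The dissonance of `x` relative to community `i` (coordinate `(r,false)` is `x_{1,r}`,
coordinate `(r,true)` is `x_{2,r}`; `0 * Real.log (0 / c) = 0` in Lean, matching the
convention that a term vanishes when the corresponding coordinate is `0`). -/
noncomputable def eta {k : ℕ} (ρ : Fin k → ℝ) (P : Matrix (Fin k) (Fin k) ℝ)
    (i : Fin k) (x : EuclideanSpace ℝ (Fin k × Bool)) : ℝ :=
  (∑ r : Fin k,
    (x (r, false) * Real.log (x (r, false) / (Real.exp 1 * ρ r * P r i))
      + x (r, true) * Real.log (x (r, true) / (Real.exp 1 * ρ r * (1 - P r i))))) + 1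

/-- The δ-dissonance range relative to community `i`. -/
noncomputable def DR {k : ℕ} (ρ : Fin k → ℝ) (P : Matrix (Fin k) (Fin k) ℝ)
    (i : Fin k) (δ : ℝ) : Set (EuclideanSpace ℝ (Fin k × Bool)) :=
  {x | (∀ p, 0 ≤ x p) ∧ eta ρ P i x ≤ δ}

/-- `CH_ξ(μ, ν) = ∑_i [ξ μ_i + (1-ξ) ν_i − μ_i^ξ ν_i^{1-ξ}]`. -/
noncomputable def CH {ι : Type*} [Fintype ι] (ξ : ℝ) (μ ν : ι → ℝ) : ℝ :=
  ∑ i, (ξ * μ i + (1 - ξ) * ν i - μ i ^ ξ * ν i ^ (1 - ξ))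

/-- The Chernoff–Hellinger divergence `Δ_+(μ,ν) = max_{ξ ∈ [0,1]} CH_ξ(μ,ν)`. -/
noncomputable def DeltaPlus {ι : Type*} [Fintype ι] (μ ν : ι → ℝ) : ℝ :=
  sSup ((fun ξ => CH ξ μ ν) '' Set.Icc (0 : ℝ) 1)

/-- `θ_i = (ρ_r P_{ri}, ρ_r (1 − P_{ri}))_{r ∈ [k]}`. -/
noncomputable def theta {k : ℕ} (ρ : Fin k → ℝ) (P : Matrix (Fin k) (Fin k) ℝ)
    (i : Fin k) : Fin k × Bool → ℝ :=
  fun p => if p.2 then ρ p.1 * (1 - P p.1 i) else ρ p.1 * P p.1 i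

/-- `x* = (ρ_r P_{ri}^{ξ} P_{rj}^{1−ξ}, ρ_r (1−P_{ri})^{ξ} (1−P_{rj})^{1−ξ})_{r ∈ [k]}`. -/
noncomputable def xstar {k : ℕ} (ρ : Fin k → ℝ) (P : Matrix (Fin k) (Fin k) ℝ)
    (i j : Fin k) (ξ : ℝ) : EuclideanSpace ℝ (Fin k × Bool) :=
  (WithLp.equiv 2 (Fin k × Bool → ℝ)).symm fun p =>
    if p.2 then ρ p.1 * ((1 - P p.1 i) ^ ξ * (1 - P p.1 j) ^ (1 - ξ))
    else ρ p.1 * (P p.1 i ^ ξ * P p.1 j ^ (1 - ξ))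

-- auxiliary lemmas

lemma myaux_hasDerivAt (a b ξ : ℝ) (ha : 0 < a) (hb : 0 < b) :
    HasDerivAt (fun ξ : ℝ => a ^ ξ * b ^ (1 - ξ))
      (a ^ ξ * b ^ (1 - ξ) * (Real.log a - Real.log b)) ξ := by
  have h1 : HasDerivAt (fun ξ : ℝ => a ^ ξ) (a ^ ξ * Real.log a) ξ :=
    (Real.hasStrictDerivAt_const_rpow ha ξ).hasDerivAt
  have h2 : HasDerivAt (fun ξ : ℝ => b ^ (1 - ξ)) (b ^ (1 - ξ) * Real.log b * (-1)) ξ :=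
    (Real.hasStrictDerivAt_const_rpow hb (1 - ξ)).hasDerivAt.comp ξ
      ((hasDerivAt_id ξ).const_sub 1)
  refine (h1.fun_mul h2).congr_deriv ?_
  ring

lemma myaux_CH_swap {ι : Type*} [Fintype ι] (ξ : ℝ) (μ ν : ι → ℝ) :
    CH ξ μ ν = CH (1 - ξ) ν μ := by
  unfold CH
  refine Finset.sum_congr rfl fun p _ => ?_
  rw [sub_sub_cancel]
  ring

lemma myaux_CH_eq {ι : Type*} [Fintype ι] (ξ : ℝ) (μ ν : ι → ℝ)
    (hμ1 : ∑ p, μ p = 1) (hν1 : ∑ p, ν p = 1) :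
    CH ξ μ ν = 1 - ∑ p, μ p ^ ξ * ν p ^ (1 - ξ) := by
  unfold CH
  rw [show (∑ p, (ξ * μ p + (1 - ξ) * ν p - μ p ^ ξ * ν p ^ (1 - ξ)))
      = ξ * (∑ p, μ p) + (1 - ξ) * (∑ p, ν p) - ∑ p, μ p ^ ξ * ν p ^ (1 - ξ) by
    rw [Finset.mul_sum, Finset.mul_sum, ← Finset.sum_add_distrib, ← Finset.sum_sub_distrib]]
  rw [hμ1, hν1]; ring

lemma myaux_deriv_zero {ι : Type*} [Fintype ι] (ξ : ℝ) (μ ν : ι → ℝ)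
    (hμ : ∀ p, 0 < μ p) (hν : ∀ p, 0 < ν p)
    (hμ1 : ∑ p, μ p = 1) (hν1 : ∑ p, ν p = 1)
    (hξ : ξ ∈ Set.Ioo (0 : ℝ) 1)
    (hmax : ∀ t ∈ Set.Icc (0 : ℝ) 1, CH t μ ν ≤ CH ξ μ ν) :
    ∑ p, μ p ^ ξ * ν p ^ (1 - ξ) * (Real.log (μ p) - Real.log (ν p)) = 0 := by
  have hD : HasDerivAt (fun t => CH t μ ν)
      (∑ p, (μ p - ν p - μ p ^ ξ * ν p ^ (1 - ξ) * (Real.log (μ p) - Real.log (ν p)))) ξ := by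
    unfold CH
    apply HasDerivAt.fun_sum
    intro p _
    have h1 : HasDerivAt (fun t : ℝ => t * μ p) (μ p) ξ := hasDerivAt_mul_const (μ p)
    have h2 : HasDerivAt (fun t : ℝ => (1 - t) * ν p) (-ν p) ξ := by
      simpa using ((hasDerivAt_id ξ).const_sub 1).mul_const (ν p)
    have h3 := myaux_hasDerivAt (μ p) (ν p) ξ (hμ p) (hν p)
    convert (h1.fun_add h2).fun_sub h3 using 1
    try ring
  have hloc : IsLocalMax (fun t => CH t μ ν) ξ := by
    filter_upwards [Icc_mem_nhds hξ.1 hξ.2] with t ht using hmax t ht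
  have h0 := hloc.hasDerivAt_eq_zero hD
  have hsplit : (∑ p, (μ p - ν p - μ p ^ ξ * ν p ^ (1 - ξ) * (Real.log (μ p) - Real.log (ν p))))
      = (∑ p, μ p) - (∑ p, ν p)
        - ∑ p, μ p ^ ξ * ν p ^ (1 - ξ) * (Real.log (μ p) - Real.log (ν p)) := by
    rw [← Finset.sum_sub_distrib, ← Finset.sum_sub_distrib]
  rw [hsplit, hμ1, hν1] at h0
  linarith

lemma myaux_eta_eq {ι : Type*} [Fintype ι] (ξ : ℝ) (μ ν x : ι → ℝ)
    (hμ : ∀ p, 0 < μ p) (hν : ∀ p, 0 < ν p)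
    (hμ1 : ∑ p, μ p = 1) (hν1 : ∑ p, ν p = 1)
    (hξ : ξ ∈ Set.Ioo (0 : ℝ) 1)
    (hmax : ∀ t ∈ Set.Icc (0 : ℝ) 1, CH t μ ν ≤ CH ξ μ ν)
    (hx : ∀ p, x p = μ p ^ ξ * ν p ^ (1 - ξ)) :
    (∑ p, x p * Real.log (x p / (Real.exp 1 * μ p))) + 1 = CH ξ μ ν := by
  have hG := myaux_deriv_zero ξ μ ν hμ hν hμ1 hν1 hξ hmax
  have hlog : ∀ p, Real.log (x p / (Real.exp 1 * μ p))
      = -(1 - ξ) * (Real.log (μ p) - Real.log (ν p)) - 1 := by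
    intro p
    have hxp : x p = μ p ^ ξ * ν p ^ (1 - ξ) := hx p
    have h1 : (0 : ℝ) < μ p ^ ξ := Real.rpow_pos_of_pos (hμ p) _
    have h2 : (0 : ℝ) < ν p ^ (1 - ξ) := Real.rpow_pos_of_pos (hν p) _
    rw [hxp, Real.log_div (mul_pos h1 h2).ne' (mul_pos (Real.exp_pos 1) (hμ p)).ne',
      Real.log_mul h1.ne' h2.ne', Real.log_mul (Real.exp_ne_zero 1) (hμ p).ne',
      Real.log_exp, Real.log_rpow (hμ p), Real.log_rpow (hν p)]
    ring
  have hsum : (∑ p, x p * Real.log (x p / (Real.exp 1 * μ p)))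
      = -(1 - ξ) * (∑ p, μ p ^ ξ * ν p ^ (1 - ξ) * (Real.log (μ p) - Real.log (ν p)))
        - ∑ p, μ p ^ ξ * ν p ^ (1 - ξ) := by
    rw [Finset.mul_sum, ← Finset.sum_sub_distrib]
    refine Finset.sum_congr rfl fun p _ => ?_
    rw [hlog p, hx p]
    ring
  rw [hsum, hG, myaux_CH_eq ξ μ ν hμ1 hν1]
  ring

theorem stmt4 (k : ℕ) (hk : 1 ≤ k) (ρ : Fin k → ℝ)
    (hρ : ∀ r, ρ r ∈ Set.Ioo (0 : ℝ) 1) (hρsum : ∑ r, ρ r = 1)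
    (P : Matrix (Fin k) (Fin k) ℝ) (hPsymm : P.IsSymm)
    (hP : ∀ r s, P r s ∈ Set.Ioo (0 : ℝ) 1)
    (i j : Fin k) (hij : i ≠ j) (hPij : ∃ r, P r i ≠ P r j)
    (ξstar : ℝ) (hξ : ξstar ∈ Set.Ioo (0 : ℝ) 1)
    (hmax : ∀ ξ ∈ Set.Icc (0 : ℝ) 1,
      CH ξ (theta ρ P i) (theta ρ P j) ≤ CH ξstar (theta ρ P i) (theta ρ P j))
    (t0 : ℝ) (ht0 : t0 = 1 / DeltaPlus (theta ρ P i) (theta ρ P j)) :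
    eta ρ P i (xstar ρ P i j ξstar) = DeltaPlus (theta ρ P i) (theta ρ P j) ∧
    eta ρ P j (xstar ρ P i j ξstar) = DeltaPlus (theta ρ P i) (theta ρ P j) ∧
    xstar ρ P i j ξstar ∈ DR ρ P i (1 / t0) ∩ DR ρ P j (1 / t0) := by
  have hθpos : ∀ (l : Fin k) (p : Fin k × Bool), 0 < theta ρ P l p := by
    rintro l ⟨r, b⟩
    cases b <;> simp only [theta] <;> simp only [Bool.false_eq_true, if_false, if_true]
    · exact mul_pos (hρ r).1 (hP r l).1
    · exact mul_pos (hρ r).1 (sub_pos.mpr (hP r l).2)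
  have hθ1 : ∀ l : Fin k, ∑ p, theta ρ P l p = 1 := by
    intro l
    rw [Fintype.sum_prod_type]
    rw [← hρsum]
    refine Finset.sum_congr rfl fun r _ => ?_
    rw [Fintype.sum_bool]
    simp only [theta, if_true, Bool.false_eq_true, if_false]
    ring
  have hxapp : ∀ p : Fin k × Bool,
      xstar ρ P i j ξstar p = theta ρ P i p ^ ξstar * theta ρ P j p ^ (1 - ξstar) := by
    rintro ⟨r, b⟩
    have hρr := (hρ r).1
    cases b
    · show ρ r * (P r i ^ ξstar * P r j ^ (1 - ξstar))
        = (ρ r * P r i) ^ ξstar * (ρ r * P r j) ^ (1 - ξstar)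
      rw [Real.mul_rpow hρr.le (hP r i).1.le, Real.mul_rpow hρr.le (hP r j).1.le,
        show ρ r ^ ξstar * P r i ^ ξstar * (ρ r ^ (1 - ξstar) * P r j ^ (1 - ξstar))
          = (ρ r ^ ξstar * ρ r ^ (1 - ξstar)) * (P r i ^ ξstar * P r j ^ (1 - ξstar)) by ring,
        ← Real.rpow_add hρr, add_sub_cancel, Real.rpow_one]
    · show ρ r * ((1 - P r i) ^ ξstar * (1 - P r j) ^ (1 - ξstar))
        = (ρ r * (1 - P r i)) ^ ξstar * (ρ r * (1 - P r j)) ^ (1 - ξstar)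
      rw [Real.mul_rpow hρr.le (sub_pos.mpr (hP r i).2).le,
        Real.mul_rpow hρr.le (sub_pos.mpr (hP r j).2).le,
        show ρ r ^ ξstar * (1 - P r i) ^ ξstar
            * (ρ r ^ (1 - ξstar) * (1 - P r j) ^ (1 - ξstar))
          = (ρ r ^ ξstar * ρ r ^ (1 - ξstar))
            * ((1 - P r i) ^ ξstar * (1 - P r j) ^ (1 - ξstar)) by ring,
        ← Real.rpow_add hρr, add_sub_cancel, Real.rpow_one]
  -- rewrite eta as a sum over the product type
  have hetai : ∀ (l : Fin k), eta ρ P l (xstar ρ P i j ξstar)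
      = (∑ p : Fin k × Bool, xstar ρ P i j ξstar p
          * Real.log (xstar ρ P i j ξstar p / (Real.exp 1 * theta ρ P l p))) + 1 := by
    intro l
    unfold eta
    congr 1
    rw [Fintype.sum_prod_type]
    refine Finset.sum_congr rfl fun r _ => ?_
    rw [Fintype.sum_bool]
    simp only [theta, if_true, Bool.false_eq_true, if_false, mul_assoc]
    ring
  -- the CH value equals eta on both sides
  have hCHi := myaux_eta_eq ξstar (theta ρ P i) (theta ρ P j) (xstar ρ P i j ξstar)
    (hθpos i) (hθpos j) (hθ1 i) (hθ1 j) hξ hmax hxapp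
  have hξ' : 1 - ξstar ∈ Set.Ioo (0 : ℝ) 1 := ⟨by linarith [hξ.2], by linarith [hξ.1]⟩
  have hmax' : ∀ t ∈ Set.Icc (0 : ℝ) 1,
      CH t (theta ρ P j) (theta ρ P i) ≤ CH (1 - ξstar) (theta ρ P j) (theta ρ P i) := by
    intro t ht
    rw [← myaux_CH_swap, show t = 1 - (1 - t) by ring, ← myaux_CH_swap]
    exact hmax (1 - t) ⟨by linarith [ht.2], by linarith [ht.1]⟩
  have hxapp' : ∀ p, xstar ρ P i j ξstar p
      = theta ρ P j p ^ (1 - ξstar) * theta ρ P i p ^ (1 - (1 - ξstar)) := by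
    intro p
    rw [sub_sub_cancel, hxapp p]
    ring
  have hCHj := myaux_eta_eq (1 - ξstar) (theta ρ P j) (theta ρ P i) (xstar ρ P i j ξstar)
    (hθpos j) (hθpos i) (hθ1 j) (hθ1 i) hξ' hmax' hxapp'
  rw [← myaux_CH_swap] at hCHj
  -- DeltaPlus equals CH at the maximizer
  have hDelta : DeltaPlus (theta ρ P i) (theta ρ P j)
      = CH ξstar (theta ρ P i) (theta ρ P j) := by
    apply IsGreatest.csSup_eq
    constructor
    · exact ⟨ξstar, ⟨hξ.1.le, hξ.2.le⟩, rfl⟩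
    · rintro y ⟨t, ht, rfl⟩
      exact hmax t ht
  have hei : eta ρ P i (xstar ρ P i j ξstar) = DeltaPlus (theta ρ P i) (theta ρ P j) := by
    rw [hetai i, hDelta]; exact hCHi
  have hej : eta ρ P j (xstar ρ P i j ξstar) = DeltaPlus (theta ρ P i) (theta ρ P j) := by
    rw [hetai j, hDelta]; exact hCHj
  have hnn : ∀ p, 0 ≤ xstar ρ P i j ξstar p := by
    intro p
    rw [hxapp p]
    exact (mul_pos (Real.rpow_pos_of_pos (hθpos i p) _)
      (Real.rpow_pos_of_pos (hθpos j p) _)).le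
  have h1t0 : 1 / t0 = DeltaPlus (theta ρ P i) (theta ρ P j) := by
    rw [ht0, one_div_one_div]
  exact ⟨hei, hej, ⟨hnn, by rw [hei, h1t0]⟩, ⟨hnn, by rw [hej, h1t0]⟩⟩
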